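/- arXiv:1205.1879 — 3 statements merged into one kernel-verified Lean document; each statement's English description precedes it below -/
import Mathlib

section
/- For the exponential potential V_b(q) = e^{-bq} - 1 + bq and the product measure μ_{β̄,λ̄} with marginal density Z̄^{-1} exp(-β̄ e^{-bq} - λ̄ q), the mean energy current is ⟨j̄_{x,x+1}⟩ = -b²(ē - b v̄)² + b² and the mean volume current is ⟨j̄'_{x,x+1}⟩ = 2b(ē - b v̄ + 1), where ē = ⟨V_b(η_0)⟩ and v̄ = ⟨η_0⟩, j̄_{x,x+1}(η) = -b² e^{-b(η_x + η_{x+1})} + b²(e^{-bη_x} + e^{-bη_{x+1}}) - γ(V_b(η_{x+1}) - V_b(η_x)), and j̄'_{x,x+1}(η) = b e^{-bη_x} + b e^{-bη_{x+1}} - γ(η_{x+1} - η_x). -/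
open MeasureTheory Real Set

private lemma aux_int {b beta c : ℝ} (hb : 0 < b) (hbeta : 0 < beta) (hc : 0 < c) :
    Integrable (fun q : ℝ => Real.exp (-beta * Real.exp (-b * q) - c * q)) := by
  have hcont : Continuous fun q : ℝ => Real.exp (-beta * Real.exp (-b * q) - c * q) :=
    Real.continuous_exp.comp ((continuous_const.mul
      (Real.continuous_exp.comp (continuous_const.mul continuous_id))).sub
      (continuous_const.mul continuous_id))
  rw [← integrableOn_univ, ← Set.Iic_union_Ioi (a := (0 : ℝ))]
  refine IntegrableOn.union ?_ ?_
  · -- on Iic 0, bound by a Gaussian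
    set a : ℝ := beta * b ^ 2 / 4 with ha
    have hapos : 0 < a := by positivity
    have hbound : ∀ q : ℝ, q ≤ 0 →
        -beta * Real.exp (-b * q) - c * q ≤ c ^ 2 / (2 * a) + (-(a / 2) * q ^ 2) := by
      intro q hq
      have h1 : (-b * q) / 2 + 1 ≤ Real.exp ((-b * q) / 2) := Real.add_one_le_exp _
      have h2 : Real.exp ((-b * q) / 2) * Real.exp ((-b * q) / 2) = Real.exp (-b * q) := by
        rw [← Real.exp_add]; ring_nf
      have hx : 0 ≤ -b * q := by nlinarith
      have h1' : ((-b * q) / 2 + 1) * ((-b * q) / 2 + 1) ≤ Real.exp (-b * q) := by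
        calc ((-b * q) / 2 + 1) * ((-b * q) / 2 + 1)
            ≤ Real.exp ((-b * q) / 2) * Real.exp ((-b * q) / 2) :=
              mul_le_mul h1 h1 (by nlinarith) (Real.exp_pos _).le
          _ = Real.exp (-b * q) := h2
      have h3 : b ^ 2 * q ^ 2 / 4 ≤ Real.exp (-b * q) := by nlinarith
      have h4 : a * q ^ 2 ≤ beta * Real.exp (-b * q) := by
        rw [ha]; nlinarith
      have h5 : -c * q ≤ (a / 2) * q ^ 2 + c ^ 2 / (2 * a) := by
        rw [← sub_nonneg]
        have heq : (a / 2) * q ^ 2 + c ^ 2 / (2 * a) - (-c * q) = (a * q + c) ^ 2 / (2 * a) := by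
          field_simp
          ring
        rw [heq]
        positivity
      nlinarith
    have hg : Integrable (fun q : ℝ =>
        Real.exp (c ^ 2 / (2 * a)) * Real.exp (-(a / 2) * q ^ 2)) :=
      (integrable_exp_neg_mul_sq (by positivity)).const_mul _
    refine Integrable.mono (hg.integrableOn (s := Set.Iic 0))
      hcont.aestronglyMeasurable.restrict ?_
    filter_upwards [ae_restrict_mem measurableSet_Iic] with q hq
    rw [Real.norm_eq_abs, Real.norm_eq_abs, Real.abs_exp, abs_of_pos (by positivity),
      ← Real.exp_add]
    exact Real.exp_le_exp.mpr (hbound q hq)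
  · refine Integrable.mono (exp_neg_integrableOn_Ioi 0 hc)
      hcont.aestronglyMeasurable.restrict ?_
    filter_upwards [ae_restrict_mem measurableSet_Ioi] with q _
    rw [Real.norm_eq_abs, Real.norm_eq_abs, Real.abs_exp, Real.abs_exp]
    refine Real.exp_le_exp.mpr ?_
    have : 0 ≤ beta * Real.exp (-b * q) := by positivity
    linarith


private lemma int_split5 {P : Measure (ℝ × ℝ)} {A B C D E : ℝ × ℝ → ℝ}
    (hA : Integrable A P) (hB : Integrable B P) (hC : Integrable C P)
    (hD : Integrable D P) (hE : Integrable E P) :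
    (∫ p, ((A p + (B p + C p)) + (D p - E p)) ∂P)
      = (((∫ p, A p ∂P) + ((∫ p, B p ∂P) + ∫ p, C p ∂P))
          + ((∫ p, D p ∂P) - ∫ p, E p ∂P)) := by
  have h1 : (∫ p, ((A p + (B p + C p)) + (D p - E p)) ∂P)
      = (∫ p, (A p + (B p + C p)) ∂P) + ∫ p, (D p - E p) ∂P :=
    integral_add (hA.add (hB.add hC)) (hD.sub hE)
  have h2 : (∫ p, (A p + (B p + C p)) ∂P)
      = (∫ p, A p ∂P) + ∫ p, (B p + C p) ∂P := integral_add hA (hB.add hC)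
  have h3 : (∫ p, (B p + C p) ∂P) = (∫ p, B p ∂P) + ∫ p, C p ∂P := integral_add hB hC
  have h4 : (∫ p, (D p - E p) ∂P) = (∫ p, D p ∂P) - ∫ p, E p ∂P := integral_sub hD hE
  rw [h1, h2, h3, h4]

private lemma int_split4 {P : Measure (ℝ × ℝ)} {B C D E : ℝ × ℝ → ℝ}
    (hB : Integrable B P) (hC : Integrable C P)
    (hD : Integrable D P) (hE : Integrable E P) :
    (∫ p, ((B p + C p) + (D p - E p)) ∂P)
      = (((∫ p, B p ∂P) + ∫ p, C p ∂P) + ((∫ p, D p ∂P) - ∫ p, E p ∂P)) := by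
  have h1 : (∫ p, ((B p + C p) + (D p - E p)) ∂P)
      = (∫ p, (B p + C p) ∂P) + ∫ p, (D p - E p) ∂P :=
    integral_add (hB.add hC) (hD.sub hE)
  have h3 : (∫ p, (B p + C p) ∂P) = (∫ p, B p ∂P) + ∫ p, C p ∂P := integral_add hB hC
  have h4 : (∫ p, (D p - E p) ∂P) = (∫ p, D p ∂P) - ∫ p, E p ∂P := integral_sub hD hE
  rw [h1, h3, h4]

/-- Mean currents for the exponential model: with `V_b(q) = e^{-bq} - 1 + bq` and the product
Gibbs measure `μ_{β̄,λ̄}` with one-site density `Z̄⁻¹ exp(-β̄ e^{-bq} - λ̄ q)`, the mean energy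
current equals `-b²(ē - b v̄)² + b²` and the mean volume current equals `2b(ē - b v̄ + 1)`. -/
theorem stmt8 (b beta lam γ : ℝ) (hb : 0 < b) (hbeta : 0 < beta) (hlam : 0 < lam)
    (hγ : 0 < γ)
    (Z : ℝ) (hZ : Z = ∫ q : ℝ, Real.exp (-beta * Real.exp (-b * q) - lam * q))
    (marg : Measure ℝ)
    (hmarg : marg = volume.withDensity (fun q : ℝ =>
      ENNReal.ofReal (Z⁻¹ * Real.exp (-beta * Real.exp (-b * q) - lam * q))))
    (V : ℝ → ℝ) (hV : ∀ q, V q = Real.exp (-b * q) - 1 + b * q)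
    (ebar vbar : ℝ)
    (he : ebar = ∫ q, V q ∂marg) (hv : vbar = ∫ q, q ∂marg)
    (μ : Measure (ℤ → ℝ)) [IsProbabilityMeasure μ]
    -- product structure: any two neighboring coordinates are i.i.d. with law `marg`
    (hμ : ∀ x : ℤ, Measure.map (fun η : ℤ → ℝ => (η x, η (x + 1))) μ = marg.prod marg) :
    ∀ x : ℤ,
      (∫ η : ℤ → ℝ,
          (-b ^ 2 * Real.exp (-b * (η x + η (x + 1)))
            + b ^ 2 * (Real.exp (-b * η x) + Real.exp (-b * η (x + 1)))
            - γ * (V (η (x + 1)) - V (η x))) ∂μ)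
        = -b ^ 2 * (ebar - b * vbar) ^ 2 + b ^ 2 ∧
      (∫ η : ℤ → ℝ,
          (b * Real.exp (-b * η x) + b * Real.exp (-b * η (x + 1))
            - γ * (η (x + 1) - η x)) ∂μ)
        = 2 * b * (ebar - b * vbar + 1) := by
  -- notation
  set ρ : ℝ → ℝ := fun q => Real.exp (-beta * Real.exp (-b * q) - lam * q) with hρ
  have hρpos : ∀ q, 0 < ρ q := fun q => Real.exp_pos _
  have hρcont : Continuous ρ := by
    rw [hρ]
    exact Real.continuous_exp.comp ((continuous_const.mul
      (Real.continuous_exp.comp (continuous_const.mul continuous_id))).sub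
      (continuous_const.mul continuous_id))
  have hmeas : ∀ x : ℤ, Measurable (fun η : ℤ → ℝ => (η x, η (x + 1))) := fun x =>
    (measurable_pi_apply x).prodMk (measurable_pi_apply (x + 1))
  -- marg is a probability measure
  have hSF : SFinite marg := by rw [hmarg]; infer_instance
  have hunivP : (marg.prod marg) Set.univ = 1 := by
    rw [← hμ 0]
    exact (Measure.isProbabilityMeasure_map (hmeas 0).aemeasurable).measure_univ
  have hprod : (marg.prod marg) Set.univ = marg Set.univ * marg Set.univ := by
    rw [← Set.univ_prod_univ, Measure.prod_prod]
  have hmarguniv : marg Set.univ = 1 := by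
    rw [hunivP] at hprod
    rcases le_total (marg Set.univ) 1 with h | h
    · have h2 : marg Set.univ * marg Set.univ ≤ marg Set.univ * 1 := mul_le_mul_right h _
      rw [mul_one, ← hprod] at h2
      exact le_antisymm h h2
    · have h2 : marg Set.univ * 1 ≤ marg Set.univ * marg Set.univ := mul_le_mul_right h _
      rw [mul_one, ← hprod] at h2
      exact le_antisymm h2 h
  have hmargprob : IsProbabilityMeasure marg := ⟨hmarguniv⟩
  -- Z⁻¹ is positive
  have hZinv : 0 < Z⁻¹ := by
    by_contra h
    push_neg at h
    have : marg = 0 := by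
      rw [hmarg]
      have h0 : (fun q : ℝ => ENNReal.ofReal
          (Z⁻¹ * Real.exp (-beta * Real.exp (-b * q) - lam * q))) = 0 := by
        funext q
        exact ENNReal.ofReal_eq_zero.mpr
          (mul_nonpos_of_nonpos_of_nonneg h (Real.exp_pos _).le)
      rw [h0, withDensity_zero]
    rw [this] at hmarguniv
    simp at hmarguniv
  -- integrability with respect to marg
  have hd_meas : Measurable fun q : ℝ => ENNReal.ofReal (Z⁻¹ * ρ q) :=
    (measurable_const.mul hρcont.measurable).ennreal_ofReal
  have hd_lt : ∀ᵐ q : ℝ ∂volume, ENNReal.ofReal (Z⁻¹ * ρ q) < ⊤ :=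
    Filter.Eventually.of_forall fun q => ENNReal.ofReal_lt_top
  have hint_iff : ∀ g : ℝ → ℝ, Integrable g marg ↔
      Integrable (fun q => g q * (Z⁻¹ * ρ q)) volume := by
    intro g
    rw [hmarg, integrable_withDensity_iff hd_meas hd_lt]
    refine integrable_congr (Filter.Eventually.of_forall fun q => ?_)
    show g q * (ENNReal.ofReal (Z⁻¹ * ρ q)).toReal = g q * (Z⁻¹ * ρ q)
    rw [ENNReal.toReal_ofReal (by positivity)]
  have hρmul : ∀ c q : ℝ, Real.exp (c * q) * ρ q =
      Real.exp (-beta * Real.exp (-b * q) - (lam - c) * q) := by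
    intro c q
    simp only [hρ, ← Real.exp_add]
    congr 1
    ring
  -- integrability of exp(-b q)
  have hintexp : Integrable (fun q => Real.exp (-b * q)) marg := by
    rw [hint_iff]
    have : (fun q : ℝ => Real.exp (-b * q) * (Z⁻¹ * ρ q)) =
        fun q => Z⁻¹ * Real.exp (-beta * Real.exp (-b * q) - (lam + b) * q) := by
      funext q
      rw [show Real.exp (-b * q) * (Z⁻¹ * ρ q) = Z⁻¹ * (Real.exp (-b * q) * ρ q) from by ring,
        hρmul (-b) q]
      congr 2
      ring
    rw [this]
    exact (aux_int hb hbeta (by linarith)).const_mul _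
  -- integrability of q
  have hintid : Integrable (fun q : ℝ => q) marg := by
    rw [hint_iff]
    have hg : Integrable (fun q : ℝ => Z⁻¹ * ((2 / lam) *
        (Real.exp (-beta * Real.exp (-b * q) - (lam / 2) * q)
          + Real.exp (-beta * Real.exp (-b * q) - (3 * lam / 2) * q)))) volume :=
      (((aux_int hb hbeta (by linarith)).add (aux_int hb hbeta (by linarith))).const_mul
        (2 / lam)).const_mul _
    refine hg.mono ((continuous_id.mul (continuous_const.mul hρcont)).aestronglyMeasurable) ?_
    refine Filter.Eventually.of_forall fun q => ?_
    have key : |q| ≤ (2 / lam) * (Real.exp (lam / 2 * q) + Real.exp (-(lam / 2) * q)) := by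
      have h1 : lam / 2 * |q| ≤ Real.exp (lam / 2 * |q|) := by
        have := Real.add_one_le_exp (lam / 2 * |q|)
        linarith
      have h2 : Real.exp (lam / 2 * |q|) ≤ Real.exp (lam / 2 * q) + Real.exp (-(lam / 2) * q) := by
        rcases abs_cases q with ⟨h, _⟩ | ⟨h, _⟩
        · rw [h]; nlinarith [Real.exp_pos (-(lam / 2) * q)]
        · rw [h]
          have : -(lam / 2) * q = lam / 2 * -q := by ring
          rw [this]
          nlinarith [Real.exp_pos (lam / 2 * q)]
      rw [div_mul_eq_mul_div, le_div_iff₀ hlam]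
      nlinarith
    have e1 : ρ q * Real.exp (lam / 2 * q) =
        Real.exp (-beta * Real.exp (-b * q) - (lam / 2) * q) := by
      rw [mul_comm, hρmul (lam / 2) q]
      congr 2
      ring
    have e2 : ρ q * Real.exp (-(lam / 2) * q) =
        Real.exp (-beta * Real.exp (-b * q) - (3 * lam / 2) * q) := by
      rw [mul_comm, hρmul (-(lam / 2)) q]
      congr 2
      ring
    rw [Real.norm_eq_abs, Real.norm_eq_abs, abs_mul,
      abs_of_pos (mul_pos hZinv (hρpos q)),
      abs_of_pos (show (0:ℝ) < Z⁻¹ * ((2 / lam) *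
        (Real.exp (-beta * Real.exp (-b * q) - (lam / 2) * q)
          + Real.exp (-beta * Real.exp (-b * q) - (3 * lam / 2) * q)))
        from mul_pos hZinv (by positivity)), ← e1, ← e2]
    calc |q| * (Z⁻¹ * ρ q)
        ≤ ((2 / lam) * (Real.exp (lam / 2 * q) + Real.exp (-(lam / 2) * q))) * (Z⁻¹ * ρ q) := by
          exact mul_le_mul_of_nonneg_right key (mul_pos hZinv (hρpos q)).le
      _ = Z⁻¹ * ((2 / lam) * (ρ q * Real.exp (lam / 2 * q) + ρ q * Real.exp (-(lam / 2) * q))) := by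
          ring
  -- integrability of V
  have hintV : Integrable V marg := by
    have : V = fun q => (Real.exp (-b * q) - 1) + b * q := by funext q; rw [hV]
    rw [this]
    exact (hintexp.sub (integrable_const 1)).add (hintid.const_mul b)
  -- abbreviation for the single-site mean of exp(-b q)
  set E : ℝ := ∫ q, Real.exp (-b * q) ∂marg with hE
  have hEe : ebar = E - 1 + b * vbar := by
    rw [he, hv, hE]
    have hc : (∫ q, V q ∂marg) = ∫ q, ((Real.exp (-b * q) - 1) + b * q) ∂marg :=
      integral_congr_ae (Filter.Eventually.of_forall fun q => by rw [hV])
    have h1 : (∫ q, ((Real.exp (-b * q) - 1) + b * q) ∂marg)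
        = (∫ q, (Real.exp (-b * q) - 1) ∂marg) + ∫ q, b * q ∂marg :=
      integral_add (hintexp.sub (integrable_const 1)) (hintid.const_mul b)
    have h2 : (∫ q, (Real.exp (-b * q) - 1) ∂marg)
        = (∫ q, Real.exp (-b * q) ∂marg) - ∫ q, (1 : ℝ) ∂marg :=
      integral_sub hintexp (integrable_const 1)
    have h3 : (∫ q, b * q ∂marg) = b * ∫ q, q ∂marg := integral_const_mul _ _
    rw [hc, h1, h2, h3, integral_const]
    simp [hmarguniv]
  -- product integrals
  have hexpcont : Continuous fun q : ℝ => Real.exp (-b * q) :=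
    Real.continuous_exp.comp (continuous_const.mul continuous_id)
  have hVcont : Continuous V := by
    have : V = fun q => Real.exp (-b * q) - 1 + b * q := funext hV
    rw [this]
    exact (hexpcont.sub continuous_const).add (continuous_const.mul continuous_id)
  have hintP1 : ∀ g : ℝ → ℝ, Integrable g marg →
      Integrable (fun p : ℝ × ℝ => g p.1) (marg.prod marg) := by
    intro g hg
    simpa using hg.mul_prod (integrable_const (1 : ℝ))
  have hintP2 : ∀ g : ℝ → ℝ, Integrable g marg →
      Integrable (fun p : ℝ × ℝ => g p.2) (marg.prod marg) := by
    intro g hg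
    simpa using (integrable_const (1 : ℝ)).mul_prod hg
  have hIP1 : ∀ g : ℝ → ℝ, (∫ p : ℝ × ℝ, g p.1 ∂(marg.prod marg)) = ∫ q, g q ∂marg := by
    intro g
    have := integral_prod_mul (μ := marg) (ν := marg) g (fun _ => (1 : ℝ))
    simpa [hmarguniv] using this
  have hIP2 : ∀ g : ℝ → ℝ, (∫ p : ℝ × ℝ, g p.2 ∂(marg.prod marg)) = ∫ q, g q ∂marg := by
    intro g
    have := integral_prod_mul (μ := marg) (ν := marg) (fun _ => (1 : ℝ)) g
    simpa [hmarguniv] using this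
  intro x
  constructor
  · -- energy current
    set G : ℝ × ℝ → ℝ := fun p =>
      -b ^ 2 * Real.exp (-b * (p.1 + p.2))
        + b ^ 2 * (Real.exp (-b * p.1) + Real.exp (-b * p.2))
        - γ * (V p.2 - V p.1) with hG
    have hGcont : Continuous G := by
      rw [hG]
      exact ((continuous_const.mul (Real.continuous_exp.comp
          (continuous_const.mul (continuous_fst.add continuous_snd)))).add
        (continuous_const.mul ((hexpcont.comp continuous_fst).add
          (hexpcont.comp continuous_snd)))).sub
        (continuous_const.mul ((hVcont.comp continuous_snd).sub (hVcont.comp continuous_fst)))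
    have key : (∫ η : ℤ → ℝ,
        (-b ^ 2 * Real.exp (-b * (η x + η (x + 1)))
          + b ^ 2 * (Real.exp (-b * η x) + Real.exp (-b * η (x + 1)))
          - γ * (V (η (x + 1)) - V (η x))) ∂μ) = ∫ p, G p ∂(marg.prod marg) := by
      rw [← hμ x, integral_map (hmeas x).aemeasurable hGcont.aestronglyMeasurable]
    rw [key]
    have hGeq : G = fun p : ℝ × ℝ =>
        (-b ^ 2 * (Real.exp (-b * p.1) * Real.exp (-b * p.2))
          + (b ^ 2 * Real.exp (-b * p.1) + b ^ 2 * Real.exp (-b * p.2)))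
          + (γ * V p.1 - γ * V p.2) := by
      funext p
      simp only [hG]
      have : Real.exp (-b * (p.1 + p.2)) = Real.exp (-b * p.1) * Real.exp (-b * p.2) := by
        rw [← Real.exp_add]; ring_nf
      rw [this]; ring
    rw [hGeq]
    have i1 : Integrable (fun p : ℝ × ℝ =>
        -b ^ 2 * (Real.exp (-b * p.1) * Real.exp (-b * p.2))) (marg.prod marg) :=
      (hintexp.mul_prod hintexp).const_mul _
    have i2 : Integrable (fun p : ℝ × ℝ => b ^ 2 * Real.exp (-b * p.1)) (marg.prod marg) :=
      (hintP1 _ hintexp).const_mul _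
    have i3 : Integrable (fun p : ℝ × ℝ => b ^ 2 * Real.exp (-b * p.2)) (marg.prod marg) :=
      (hintP2 _ hintexp).const_mul _
    have i4 : Integrable (fun p : ℝ × ℝ => γ * V p.1) (marg.prod marg) :=
      (hintP1 _ hintV).const_mul _
    have i5 : Integrable (fun p : ℝ × ℝ => γ * V p.2) (marg.prod marg) :=
      (hintP2 _ hintV).const_mul _
    refine Eq.trans (int_split5 i1 i2 i3 i4 i5) ?_
    have hfm : (∫ p : ℝ × ℝ, Real.exp (-b * p.1) * Real.exp (-b * p.2) ∂(marg.prod marg))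
        = (∫ q, Real.exp (-b * q) ∂marg) * ∫ q, Real.exp (-b * q) ∂marg :=
      integral_prod_mul (fun q => Real.exp (-b * q)) (fun q => Real.exp (-b * q))
    rw [integral_const_mul, integral_const_mul, integral_const_mul, integral_const_mul,
      integral_const_mul, hfm,
      hIP1 (fun q => Real.exp (-b * q)), hIP2 (fun q => Real.exp (-b * q)),
      hIP1 V, hIP2 V]
    rw [← hE, ← he]
    have hE' : E = ebar - b * vbar + 1 := by linarith
    rw [hE']
    ring
  · -- volume current
    set G : ℝ × ℝ → ℝ := fun p =>
      b * Real.exp (-b * p.1) + b * Real.exp (-b * p.2) - γ * (p.2 - p.1) with hG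
    have hGcont : Continuous G := by
      rw [hG]
      exact ((continuous_const.mul (hexpcont.comp continuous_fst)).add
        (continuous_const.mul (hexpcont.comp continuous_snd))).sub
        (continuous_const.mul (continuous_snd.sub continuous_fst))
    have key : (∫ η : ℤ → ℝ,
        (b * Real.exp (-b * η x) + b * Real.exp (-b * η (x + 1))
          - γ * (η (x + 1) - η x)) ∂μ) = ∫ p, G p ∂(marg.prod marg) := by
      rw [← hμ x, integral_map (hmeas x).aemeasurable hGcont.aestronglyMeasurable]
    rw [key]
    have hGeq : G = fun p : ℝ × ℝ =>
        (b * Real.exp (-b * p.1) + b * Real.exp (-b * p.2)) + (γ * p.1 - γ * p.2) := by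
      funext p; simp only [hG]; ring
    rw [hGeq]
    have i2 : Integrable (fun p : ℝ × ℝ => b * Real.exp (-b * p.1)) (marg.prod marg) :=
      (hintP1 _ hintexp).const_mul _
    have i3 : Integrable (fun p : ℝ × ℝ => b * Real.exp (-b * p.2)) (marg.prod marg) :=
      (hintP2 _ hintexp).const_mul _
    have i4 : Integrable (fun p : ℝ × ℝ => γ * p.1) (marg.prod marg) :=
      (hintP1 _ hintid).const_mul _
    have i5 : Integrable (fun p : ℝ × ℝ => γ * p.2) (marg.prod marg) :=
      (hintP2 _ hintid).const_mul _
    refine Eq.trans (int_split4 i2 i3 i4 i5) ?_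
    rw [integral_const_mul, integral_const_mul, integral_const_mul, integral_const_mul,
      hIP1 (fun q => Real.exp (-b * q)), hIP2 (fun q => Real.exp (-b * q)),
      hIP1 (fun q => q), hIP2 (fun q => q)]
    rw [← hE, ← hv]
    have hE' : E = ebar - b * vbar + 1 := by linarith
    rw [hE']
    ring
end

section
/- Let F: ℤ² → ℝ be a finitely supported symmetric function and define F̄: ℕ → ℝ by F̄(α) = Σ_{z ∈ ℤ} F(z, z+α). Let (𝔖F)(x,y) = Σ_{u∈ℤ} [F applied to the configuration with occupation exchanged at bond (u,u+1)] - F(x,y), the exchange generator. Then the barred image satisfies: (𝔖F)^bar(0) = 0, (𝔖F)^bar(1) = 2(F̄(2) - F̄(1)), and for α ≥ 2, (𝔖F)^bar(α) = 2(F̄(α+1) - F̄(α)) + 2(F̄(α-1) - F̄(α)). Consequently there exists a constant C > 0 (independent of F) with C^{-1} Σ_{x,y ≥ 1, |x-y|=1} (F̄(y) - F̄(x))² ≤ Σ_{α ∈ ℕ} F̄(α) · (-(𝔖F)^bar)(α) ≤ C Σ_{x,y ≥ 1, |x-y|=1} (F̄(y) - F̄(x))². -/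
/-- The exchange generator `𝔖` acting on a symmetric two-particle function `F : ℤ² → ℝ`,
written in coordinates: `(𝔖F)(x,y) = Σ_u [F(σ^{u,u+1}) - F(σ)]` for `σ = δ_x + δ_y`. -/
noncomputable def exchGen (F : ℤ → ℤ → ℝ) (x y : ℤ) : ℝ :=
  if x = y then F (x - 1) (x - 1) + F (x + 1) (x + 1) - 2 * F x x
  else if y = x + 1 then F (x - 1) (x + 1) + F x (x + 2) - 2 * F x (x + 1)
  else if x = y + 1 then F (y - 1) (y + 1) + F y (y + 2) - 2 * F y (y + 1)
  else F (x - 1) y + F (x + 1) y + F x (y - 1) + F x (y + 1) - 4 * F x y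

/-- `F̄(α) = Σ_{z∈ℤ} F(z, z+α)`. -/
noncomputable def barOf (F : ℤ → ℤ → ℝ) (α : ℕ) : ℝ := ∑ᶠ z : ℤ, F z (z + α)

open Function Set

lemma suppFinAux {F : ℤ → ℤ → ℝ}
    (hfin : (Function.support fun p : ℤ × ℤ => F p.1 p.2).Finite)
    (u v : ℤ → ℤ) (hu : Function.Injective u) :
    (Function.support fun z : ℤ => F (u z) (v z)).Finite := by
  have hsub : (Function.support fun z : ℤ => F (u z) (v z))
      ⊆ (fun z : ℤ => ((u z, v z) : ℤ × ℤ)) ⁻¹' (Function.support fun p : ℤ × ℤ => F p.1 p.2) :=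
    fun z hz => hz
  refine Set.Finite.subset (hfin.preimage ?_) hsub
  intro x _ y _ h
  exact hu (congrArg Prod.fst h)

lemma finAddAux {f g : ℤ → ℝ} (hf : (Function.support f).Finite)
    (hg : (Function.support g).Finite) :
    (Function.support fun z => f z + g z).Finite := by
  refine (hf.union hg).subset fun x hx => ?_
  by_contra h
  simp only [Set.mem_union, Function.mem_support, not_or, not_not] at h
  exact hx (by simp [h.1, h.2])

lemma finMulAux (c : ℝ) {f : ℤ → ℝ} (hf : (Function.support f).Finite) :
    (Function.support fun z => c * f z).Finite := by
  refine hf.subset fun x hx => ?_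
  simp only [Function.mem_support] at hx ⊢
  intro h0; exact hx (by rw [h0, mul_zero])

lemma shiftSum (F : ℤ → ℤ → ℝ) (a c : ℤ) :
    (∑ᶠ z : ℤ, F (z + a) (z + a + c)) = ∑ᶠ z : ℤ, F z (z + c) :=
  finsum_eq_of_bijective (fun z => z + a)
    ⟨fun x y h => by simp only [] at h; omega, fun y => ⟨y - a, by ring⟩⟩ (fun z => rfl)

lemma part1 (F : ℤ → ℤ → ℝ)
    (hfin : (Function.support fun p : ℤ × ℤ => F p.1 p.2).Finite) :
    barOf (exchGen F) 0 = 0 ∧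
    barOf (exchGen F) 1 = 2 * (barOf F 2 - barOf F 1) ∧
    ∀ α : ℕ, 2 ≤ α →
      barOf (exchGen F) α
        = 2 * (barOf F (α + 1) - barOf F α) + 2 * (barOf F (α - 1) - barOf F α) := by
  have S := shiftSum F
  have fin1 : ∀ (u v : ℤ → ℤ), Function.Injective u →
      (Function.support fun z : ℤ => F (u z) (v z)).Finite :=
    fun u v hu => suppFinAux hfin u v hu
  refine ⟨?_, ?_, ?_⟩
  · -- α = 0
    have e0 : barOf (exchGen F) 0
        = ∑ᶠ z : ℤ, (F (z - 1) (z - 1) + F (z + 1) (z + 1) - 2 * F z z) := by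
      simp only [barOf]
      refine finsum_congr fun z => ?_
      rw [show z + ((0:ℕ):ℤ) = z by simp]
      simp only [exchGen]
      simp
    have fA : (Function.support fun z : ℤ => F (z - 1) (z - 1)).Finite :=
      fin1 (fun z => z - 1) (fun z => z - 1) (fun x y h => by simp only [] at h; omega)
    have fB : (Function.support fun z : ℤ => F (z + 1) (z + 1)).Finite :=
      fin1 (fun z => z + 1) (fun z => z + 1) (fun x y h => by simp only [] at h; omega)
    have fE : (Function.support fun z : ℤ => F z z).Finite :=
      fin1 (fun z => z) (fun z => z) (fun x y h => h)
    have fAB : (Function.support fun z : ℤ => F (z - 1) (z - 1) + F (z + 1) (z + 1)).Finite :=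
      finAddAux fA fB
    have fE2 : (Function.support fun z : ℤ => 2 * F z z).Finite := finMulAux 2 fE
    have tA : (∑ᶠ z : ℤ, F (z - 1) (z - 1)) = ∑ᶠ z : ℤ, F z (z + 0) := by
      rw [← S (-1) 0]
      exact finsum_congr fun z => by
        rw [show z + (-1) + 0 = z - 1 by ring, show z + (-1 : ℤ) = z - 1 by ring]
    have tB : (∑ᶠ z : ℤ, F (z + 1) (z + 1)) = ∑ᶠ z : ℤ, F z (z + 0) := by
      rw [← S 1 0]
      exact finsum_congr fun z => by rw [show z + (1:ℤ) + 0 = z + 1 by ring]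
    have tE : (∑ᶠ z : ℤ, 2 * F z z) = 2 * ∑ᶠ z : ℤ, F z (z + 0) := by
      rw [(mul_finsum _ 2).symm]
      exact congrArg (2 * ·) (finsum_congr fun z => by rw [add_zero])
    rw [e0, finsum_sub_distrib fAB fE2, finsum_add_distrib fA fB, tA, tB, tE]
    ring
  · -- α = 1
    have e1 : barOf (exchGen F) 1
        = ∑ᶠ z : ℤ, (F (z - 1) (z + 1) + F z (z + 2) - 2 * F z (z + 1)) := by
      simp only [barOf]
      refine finsum_congr fun z => ?_
      rw [show z + ((1:ℕ):ℤ) = z + 1 by simp]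
      simp only [exchGen]
      simp
    have fA : (Function.support fun z : ℤ => F (z - 1) (z + 1)).Finite :=
      fin1 (fun z => z - 1) (fun z => z + 1) (fun x y h => by simp only [] at h; omega)
    have fB : (Function.support fun z : ℤ => F z (z + 2)).Finite :=
      fin1 (fun z => z) (fun z => z + 2) (fun x y h => h)
    have fE : (Function.support fun z : ℤ => F z (z + 1)).Finite :=
      fin1 (fun z => z) (fun z => z + 1) (fun x y h => h)
    have fAB : (Function.support fun z : ℤ => F (z - 1) (z + 1) + F z (z + 2)).Finite :=
      finAddAux fA fB
    have fE2 : (Function.support fun z : ℤ => 2 * F z (z + 1)).Finite := finMulAux 2 fE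
    have tA : (∑ᶠ z : ℤ, F (z - 1) (z + 1)) = ∑ᶠ z : ℤ, F z (z + 2) := by
      rw [← S (-1) 2]
      exact finsum_congr fun z => by
        rw [show z + (-1) + 2 = z + 1 by ring, show z + (-1 : ℤ) = z - 1 by ring]
    have tE : (∑ᶠ z : ℤ, 2 * F z (z + 1)) = 2 * ∑ᶠ z : ℤ, F z (z + 1) :=
      (mul_finsum _ 2).symm
    have b2 : barOf F 2 = ∑ᶠ z : ℤ, F z (z + 2) := by simp only [barOf]; norm_num
    have b1 : barOf F 1 = ∑ᶠ z : ℤ, F z (z + 1) := by simp only [barOf]; norm_num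
    rw [e1, finsum_sub_distrib fAB fE2, finsum_add_distrib fA fB, tA, tE, b2, b1]
    ring
  · -- α ≥ 2
    intro α hα
    have eα : barOf (exchGen F) α
        = ∑ᶠ z : ℤ, (F (z - 1) (z + (α:ℤ)) + F (z + 1) (z + (α:ℤ))
            + F z (z + (α:ℤ) - 1) + F z (z + (α:ℤ) + 1) - 4 * F z (z + (α:ℤ))) := by
      simp only [barOf]
      refine finsum_congr fun z => ?_
      simp only [exchGen]
      rw [if_neg (by omega), if_neg (by omega), if_neg (by omega)]
    have fA : (Function.support fun z : ℤ => F (z - 1) (z + (α:ℤ))).Finite :=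
      fin1 (fun z => z - 1) (fun z => z + (α:ℤ)) (fun x y h => by simp only [] at h; omega)
    have fB : (Function.support fun z : ℤ => F (z + 1) (z + (α:ℤ))).Finite :=
      fin1 (fun z => z + 1) (fun z => z + (α:ℤ)) (fun x y h => by simp only [] at h; omega)
    have fC : (Function.support fun z : ℤ => F z (z + (α:ℤ) - 1)).Finite :=
      fin1 (fun z => z) (fun z => z + (α:ℤ) - 1) (fun x y h => h)
    have fD : (Function.support fun z : ℤ => F z (z + (α:ℤ) + 1)).Finite :=
      fin1 (fun z => z) (fun z => z + (α:ℤ) + 1) (fun x y h => h)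
    have fE : (Function.support fun z : ℤ => F z (z + (α:ℤ))).Finite :=
      fin1 (fun z => z) (fun z => z + (α:ℤ)) (fun x y h => h)
    have fAB : (Function.support fun z : ℤ =>
        F (z - 1) (z + (α:ℤ)) + F (z + 1) (z + (α:ℤ))).Finite := finAddAux fA fB
    have fABC : (Function.support fun z : ℤ =>
        F (z - 1) (z + (α:ℤ)) + F (z + 1) (z + (α:ℤ)) + F z (z + (α:ℤ) - 1)).Finite :=
      finAddAux fAB fC
    have fABCD : (Function.support fun z : ℤ =>
        F (z - 1) (z + (α:ℤ)) + F (z + 1) (z + (α:ℤ)) + F z (z + (α:ℤ) - 1)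
          + F z (z + (α:ℤ) + 1)).Finite := finAddAux fABC fD
    have fE4 : (Function.support fun z : ℤ => 4 * F z (z + (α:ℤ))).Finite := finMulAux 4 fE
    have tA : (∑ᶠ z : ℤ, F (z - 1) (z + (α:ℤ))) = ∑ᶠ z : ℤ, F z (z + ((α:ℤ) + 1)) := by
      rw [← S (-1) ((α:ℤ) + 1)]
      exact finsum_congr fun z => by
        rw [show z + (-1) + ((α:ℤ) + 1) = z + (α:ℤ) by ring, show z + (-1 : ℤ) = z - 1 by ring]
    have tB : (∑ᶠ z : ℤ, F (z + 1) (z + (α:ℤ))) = ∑ᶠ z : ℤ, F z (z + ((α:ℤ) - 1)) := by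
      rw [← S 1 ((α:ℤ) - 1)]
      exact finsum_congr fun z => by
        rw [show z + 1 + ((α:ℤ) - 1) = z + (α:ℤ) by ring]
    have tC : (∑ᶠ z : ℤ, F z (z + (α:ℤ) - 1)) = ∑ᶠ z : ℤ, F z (z + ((α:ℤ) - 1)) :=
      finsum_congr fun z => by rw [show z + (α:ℤ) - 1 = z + ((α:ℤ) - 1) by ring]
    have tD : (∑ᶠ z : ℤ, F z (z + (α:ℤ) + 1)) = ∑ᶠ z : ℤ, F z (z + ((α:ℤ) + 1)) :=
      finsum_congr fun z => by rw [show z + (α:ℤ) + 1 = z + ((α:ℤ) + 1) by ring]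
    have tE : (∑ᶠ z : ℤ, 4 * F z (z + (α:ℤ))) = 4 * ∑ᶠ z : ℤ, F z (z + (α:ℤ)) :=
      (mul_finsum _ 4).symm
    have bP : barOf F (α + 1) = ∑ᶠ z : ℤ, F z (z + ((α:ℤ) + 1)) := by
      simp only [barOf]
      rw [show ((α + 1 : ℕ):ℤ) = (α:ℤ) + 1 by push_cast; ring]
    have bM : barOf F (α - 1) = ∑ᶠ z : ℤ, F z (z + ((α:ℤ) - 1)) := by
      simp only [barOf]
      rw [show ((α - 1 : ℕ):ℤ) = (α:ℤ) - 1 by omega]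
    have bO : barOf F α = ∑ᶠ z : ℤ, F z (z + (α:ℤ)) := rfl
    rw [eα, finsum_sub_distrib fABCD fE4, finsum_add_distrib fABC fD,
      finsum_add_distrib fAB fC, finsum_add_distrib fA fB, tA, tB, tC, tD, tE, bP, bM, bO]
    ring

noncomputable def hfunAux (g : ℕ → ℝ) (α : ℕ) : ℝ :=
  if α = 0 then 0
  else if α = 1 then 2 * g 1 * (g 1 - g 2)
  else 2 * g α * (g α - g (α + 1)) + 2 * g α * (g α - g (α - 1))

noncomputable def dfunAux (g : ℕ → ℝ) (α : ℕ) : ℝ :=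
  if 1 ≤ α then (g (α + 1) - g α) ^ 2 else 0

lemma TsumAux (g : ℕ → ℝ) (n : ℕ) :
    ∑ α ∈ Finset.range (n + 2), hfunAux g α
      = 2 * ∑ α ∈ Finset.range (n + 1), dfunAux g α
        + 2 * g (n + 1) * (g (n + 1) - g (n + 2)) := by
  induction n with
  | zero =>
      simp [hfunAux, dfunAux, Finset.sum_range_succ]
  | succ n ih =>
      have e1 : ∑ α ∈ Finset.range (n + 1 + 2), hfunAux g α
          = (∑ α ∈ Finset.range (n + 2), hfunAux g α) + hfunAux g (n + 2) :=
        Finset.sum_range_succ _ _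
      have e2 : ∑ α ∈ Finset.range (n + 1 + 1), dfunAux g α
          = (∑ α ∈ Finset.range (n + 1), dfunAux g α) + dfunAux g (n + 1) :=
        Finset.sum_range_succ _ _
      have h1 : hfunAux g (n + 2)
          = 2 * g (n + 2) * (g (n + 2) - g (n + 3))
            + 2 * g (n + 2) * (g (n + 2) - g (n + 1)) := by
        simp [hfunAux]
      have h2 : dfunAux g (n + 1) = (g (n + 2) - g (n + 1)) ^ 2 := by simp [dfunAux]
      rw [e1, ih, e2, h1, h2]; ring

lemma hsumAux (g : ℕ → ℝ) (hgfin : (Function.support g).Finite) :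
    (∑ᶠ α : ℕ, hfunAux g α) = 2 * ∑ᶠ α : ℕ, dfunAux g α := by
  obtain ⟨N, hN⟩ : ∃ N : ℕ, ∀ α, N ≤ α → g α = 0 := by
    obtain ⟨M, hM⟩ := hgfin.bddAbove
    exact ⟨M + 1, fun α hα => by
      by_contra h
      have := hM (Function.mem_support.2 h)
      omega⟩
  have hsupph : Function.support (hfunAux g) ⊆ ↑(Finset.range (N + 2)) := by
    intro α hα
    simp only [Finset.coe_range, Set.mem_Iio]
    by_contra hc; push_neg at hc
    have hz : g α = 0 := hN α (by omega)
    exact hα (by simp [hfunAux, show α ≠ 0 by omega, show α ≠ 1 by omega, hz])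
  have hsuppd : Function.support (dfunAux g) ⊆ ↑(Finset.range (N + 1)) := by
    intro α hα
    simp only [Finset.coe_range, Set.mem_Iio]
    by_contra hc; push_neg at hc
    exact hα (by simp [dfunAux, hN α (by omega), hN (α + 1) (by omega)])
  have e1 : (∑ᶠ α : ℕ, hfunAux g α) = ∑ α ∈ Finset.range (N + 2), hfunAux g α :=
    finsum_eq_sum_of_support_subset _ hsupph
  have e2 : (∑ᶠ α : ℕ, dfunAux g α) = ∑ α ∈ Finset.range (N + 1), dfunAux g α :=
    finsum_eq_sum_of_support_subset _ hsuppd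
  rw [e1, e2, TsumAux g N, hN (N + 1) (by omega)]
  ring

noncomputable def f1Aux (g : ℕ → ℝ) (p : ℕ × ℕ) : ℝ :=
  if 1 ≤ p.1 ∧ p.2 = p.1 + 1 then (g p.2 - g p.1) ^ 2 else 0

noncomputable def f2Aux (g : ℕ → ℝ) (p : ℕ × ℕ) : ℝ :=
  if 1 ≤ p.2 ∧ p.1 = p.2 + 1 then (g p.2 - g p.1) ^ 2 else 0

lemma splitAux (g : ℕ → ℝ) (p : ℕ × ℕ) :
    (if 1 ≤ p.1 ∧ 1 ≤ p.2 ∧ (p.2 = p.1 + 1 ∨ p.1 = p.2 + 1)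
      then (g p.2 - g p.1) ^ 2 else 0) = f1Aux g p + f2Aux g p := by
  simp only [f1Aux, f2Aux]
  split_ifs <;> first | ring1 | (exfalso; omega)

lemma dfin (g : ℕ → ℝ) (hgfin : (Function.support g).Finite) :
    (Function.support (dfunAux g)).Finite := by
  have hsub : Function.support (dfunAux g)
      ⊆ Function.support g ∪ (fun α : ℕ => α + 1) ⁻¹' Function.support g := by
    intro α hα
    by_contra h
    simp only [Set.mem_union, Set.mem_preimage, Function.mem_support, not_or, not_not] at h
    refine hα ?_
    simp only [dfunAux]
    rw [h.1, h.2]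
    simp
  exact (hgfin.union (hgfin.preimage (fun a _ b _ h => by omega))).subset hsub

lemma f1fin (g : ℕ → ℝ) (hgfin : (Function.support g).Finite) :
    (Function.support (f1Aux g)).Finite := by
  have hsub : Function.support (f1Aux g)
      ⊆ (fun α : ℕ => ((α, α + 1) : ℕ × ℕ)) '' Function.support (dfunAux g) := by
    intro p hp
    by_cases hcond : 1 ≤ p.1 ∧ p.2 = p.1 + 1
    · refine ⟨p.1, ?_, by simp [Prod.ext_iff, hcond.2]⟩
      simp only [Function.mem_support, f1Aux, if_pos hcond] at hp
      rw [hcond.2] at hp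
      simp only [Function.mem_support, dfunAux, if_pos hcond.1]
      exact hp
    · exact absurd (by simp [f1Aux, hcond]) hp
  exact ((dfin g hgfin).image _).subset hsub

lemma f2fin (g : ℕ → ℝ) (hgfin : (Function.support g).Finite) :
    (Function.support (f2Aux g)).Finite := by
  have hsub : Function.support (f2Aux g)
      ⊆ (fun α : ℕ => ((α + 1, α) : ℕ × ℕ)) '' Function.support (dfunAux g) := by
    intro p hp
    by_cases hcond : 1 ≤ p.2 ∧ p.1 = p.2 + 1
    · refine ⟨p.2, ?_, by simp [Prod.ext_iff, hcond.2]⟩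
      simp only [Function.mem_support, f2Aux, if_pos hcond] at hp
      rw [hcond.2] at hp
      simp only [Function.mem_support, dfunAux, if_pos hcond.1]
      intro h0
      exact hp (by rw [show (g p.2 - g (p.2 + 1)) ^ 2 = (g (p.2 + 1) - g p.2) ^ 2 by ring, h0])
    · exact absurd (by simp [f2Aux, hcond]) hp
  exact ((dfin g hgfin).image _).subset hsub

lemma sumf1 (g : ℕ → ℝ) :
    (∑ᶠ p : ℕ × ℕ, f1Aux g p) = ∑ᶠ α : ℕ, dfunAux g α := by
  have inj1 : Function.Injective (fun α : ℕ => ((α, α + 1) : ℕ × ℕ)) :=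
    fun a b h => (Prod.ext_iff.1 h).1
  rw [← finsum_mem_univ (f1Aux g),
    finsum_mem_inter_support_eq' (f1Aux g) Set.univ
      (Set.range fun α : ℕ => ((α, α + 1) : ℕ × ℕ)) ?_,
    finsum_mem_range inj1]
  · exact finsum_congr fun α => by
      by_cases h : 1 ≤ α <;> simp [f1Aux, dfunAux, h]
  · intro p hp
    simp only [Set.mem_univ, true_iff, Set.mem_range]
    by_cases hcond : 1 ≤ p.1 ∧ p.2 = p.1 + 1
    · exact ⟨p.1, by simp [Prod.ext_iff, hcond.2]⟩
    · exact absurd (by simp [f1Aux, hcond]) hp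

lemma sumf2 (g : ℕ → ℝ) :
    (∑ᶠ p : ℕ × ℕ, f2Aux g p) = ∑ᶠ α : ℕ, dfunAux g α := by
  have inj2 : Function.Injective (fun α : ℕ => ((α + 1, α) : ℕ × ℕ)) :=
    fun a b h => (Prod.ext_iff.1 h).2
  rw [← finsum_mem_univ (f2Aux g),
    finsum_mem_inter_support_eq' (f2Aux g) Set.univ
      (Set.range fun α : ℕ => ((α + 1, α) : ℕ × ℕ)) ?_,
    finsum_mem_range inj2]
  · refine finsum_congr fun α => ?_
    by_cases h : 1 ≤ α <;> simp [f2Aux, dfunAux, h]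
    ring
  · intro p hp
    simp only [Set.mem_univ, true_iff, Set.mem_range]
    by_cases hcond : 1 ≤ p.2 ∧ p.1 = p.2 + 1
    · exact ⟨p.2, by simp [Prod.ext_iff, hcond.2]⟩
    · exact absurd (by simp [f2Aux, hcond]) hp

lemma pairSum (g : ℕ → ℝ) (hgfin : (Function.support g).Finite) :
    (∑ᶠ p : ℕ × ℕ, if 1 ≤ p.1 ∧ 1 ≤ p.2 ∧ (p.2 = p.1 + 1 ∨ p.1 = p.2 + 1)
        then (g p.2 - g p.1) ^ 2 else 0)
      = 2 * ∑ᶠ α : ℕ, dfunAux g α := by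
  rw [finsum_congr (splitAux g), finsum_add_distrib (f1fin g hgfin) (f2fin g hgfin),
    sumf1 g, sumf2 g]
  ring

/-- Action of the exchange generator on the barred function, and the resulting two-sided
comparison of the Dirichlet form `Σ F̄ (-𝔖F)^bar` with `Σ_{x,y≥1,|x-y|=1} (F̄(y)-F̄(x))²`. -/
theorem stmt11 :
    (∀ F : ℤ → ℤ → ℝ, (∀ x y, F x y = F y x) →
      (Function.support (fun p : ℤ × ℤ => F p.1 p.2)).Finite →
      barOf (exchGen F) 0 = 0 ∧
      barOf (exchGen F) 1 = 2 * (barOf F 2 - barOf F 1) ∧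
      ∀ α : ℕ, 2 ≤ α →
        barOf (exchGen F) α
          = 2 * (barOf F (α + 1) - barOf F α) + 2 * (barOf F (α - 1) - barOf F α)) ∧
    ∃ C : ℝ, 0 < C ∧ ∀ F : ℤ → ℤ → ℝ, (∀ x y, F x y = F y x) →
      (Function.support (fun p : ℤ × ℤ => F p.1 p.2)).Finite →
      C⁻¹ * (∑ᶠ p : ℕ × ℕ,
          if 1 ≤ p.1 ∧ 1 ≤ p.2 ∧ (p.2 = p.1 + 1 ∨ p.1 = p.2 + 1)
          then (barOf F p.2 - barOf F p.1) ^ 2 else 0)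
        ≤ ∑ᶠ α : ℕ, barOf F α * (-(barOf (exchGen F) α)) ∧
      (∑ᶠ α : ℕ, barOf F α * (-(barOf (exchGen F) α)))
        ≤ C * (∑ᶠ p : ℕ × ℕ,
          if 1 ≤ p.1 ∧ 1 ≤ p.2 ∧ (p.2 = p.1 + 1 ∨ p.1 = p.2 + 1)
          then (barOf F p.2 - barOf F p.1) ^ 2 else 0) := by
  refine ⟨fun F _ hfin => part1 F hfin, 1, one_pos, ?_⟩
  intro F hsym hfin
  obtain ⟨h0, h1, h2⟩ := part1 F hfin
  have hgfin : (Function.support (barOf F)).Finite := by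
    have hsub : Function.support (barOf F)
        ⊆ (fun p : ℤ × ℤ => (p.2 - p.1).toNat) ''
            (Function.support fun p : ℤ × ℤ => F p.1 p.2) := by
      intro α hα
      have hex : ∃ z : ℤ, F z (z + (α:ℤ)) ≠ 0 := by
        by_contra hz
        push_neg at hz
        refine hα ?_
        have hb : barOf F α = ∑ᶠ z : ℤ, (0:ℝ) := finsum_congr hz
        simpa using hb
      obtain ⟨z, hz⟩ := hex
      exact ⟨(z, z + (α:ℤ)), hz, by simp⟩
    exact (hfin.image _).subset hsub
  have hpt : ∀ α : ℕ, barOf F α * (-(barOf (exchGen F) α)) = hfunAux (barOf F) α := by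
    intro α
    match α with
    | 0 => rw [h0]; simp [hfunAux]
    | 1 =>
        rw [h1, show hfunAux (barOf F) 1 = 2 * barOf F 1 * (barOf F 1 - barOf F 2)
          from by simp [hfunAux]]
        ring
    | (n+2) =>
        rw [h2 (n+2) (by omega), show n+2-1 = n+1 from rfl,
          show hfunAux (barOf F) (n+2)
            = 2 * barOf F (n+2) * (barOf F (n+2) - barOf F (n+2+1))
              + 2 * barOf F (n+2) * (barOf F (n+2) - barOf F (n+1))
            from by simp [hfunAux]]
        ring
  have hL : (∑ᶠ α : ℕ, barOf F α * (-(barOf (exchGen F) α)))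
      = ∑ᶠ α : ℕ, hfunAux (barOf F) α := finsum_congr hpt
  have hDir := hsumAux (barOf F) hgfin
  have hPair := pairSum (barOf F) hgfin
  constructor
  · rw [hPair, hL, hDir]; norm_num
  · rw [hPair, hL, hDir]; norm_num
end

section
/- Let φ: ℝ → (0,1) be twice continuously differentiable, nonincreasing, with φ(u) = e^{λ(1-u)} for u ≥ 2 and φ(u) = (1+λ+λ²/2)e^{-λ} for u ≤ 1, where 0 < λ < 1, satisfying 0 ≤ -φ'(u) ≤ λφ(u) and φ(u) ≥ e^{-λ(1+u)} for u > 0. Then the function f(x,σ) = ∫_ℝ φ(|x-y|/σ) e^{-2λ|y|} dy (for x ∈ ℝ, σ ≥ 1) satisfies c₁ exp(-λ|x|/σ) ≤ f(x,σ) ≤ c₂ exp(-λ|x|/σ) for constants c₁, c₂ > 0 depending only on λ. -/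
open Real MeasureTheory Set

lemma aux_exp_abs_integrable {a : ℝ} (ha : 0 < a) :
    Integrable (fun y : ℝ => Real.exp (-(a * |y|))) := by
  have hf : IntegrableOn (fun y : ℝ => Real.exp (-(a * |y|))) (Ioi 0) := by
    refine (exp_neg_integrableOn_Ioi 0 ha).congr_fun (fun y hy => ?_) measurableSet_Ioi
    rw [abs_of_pos hy]; ring_nf
  have int_Iic : IntegrableOn (fun y : ℝ => Real.exp (-(a * |y|))) (Iic 0) := by
    rw [← Measure.map_neg_eq_self (volume : Measure ℝ)]
    have m : MeasurableEmbedding fun x : ℝ => -x := (Homeomorph.neg ℝ).measurableEmbedding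
    rw [m.integrableOn_map_iff]
    simp_rw [Function.comp_def, abs_neg, neg_preimage, neg_Iic, neg_zero]
    exact Iff.mpr integrableOn_Ici_iff_integrableOn_Ioi hf
  have h := int_Iic.union hf
  rwa [Iic_union_Ioi, integrableOn_univ] at h

lemma aux_exp_abs_pos {a : ℝ} (ha : 0 < a) :
    0 < ∫ y : ℝ, Real.exp (-(a * |y|)) := by
  rw [integral_pos_iff_support_of_nonneg (fun y => (Real.exp_pos _).le)
    (aux_exp_abs_integrable ha)]
  have h : Function.support (fun y : ℝ => Real.exp (-(a * |y|))) = Set.univ := by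
    ext y; simp [Real.exp_ne_zero]
  rw [h]
  simp

/-- For the cutoff function `φ` (C², nonincreasing, equal to `e^{λ(1-u)}` for `u ≥ 2` and
constant for `u ≤ 1`, with the stated derivative and lower bounds), the smoothed weight
`f(x,σ) = ∫ φ(|x-y|/σ) e^{-2λ|y|} dy` satisfies
`c₁ e^{-λ|x|/σ} ≤ f(x,σ) ≤ c₂ e^{-λ|x|/σ}` with constants depending only on `λ`. -/
theorem stmt19 (lam : ℝ) (hlam0 : 0 < lam) (hlam1 : lam < 1) :
    ∃ c₁ c₂ : ℝ, 0 < c₁ ∧ 0 < c₂ ∧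
      ∀ φ : ℝ → ℝ, ContDiff ℝ 2 φ → Antitone φ →
        (∀ u : ℝ, 0 < φ u ∧ φ u < 1) →
        (∀ u : ℝ, 2 ≤ u → φ u = Real.exp (lam * (1 - u))) →
        (∀ u : ℝ, u ≤ 1 → φ u = (1 + lam + lam ^ 2 / 2) * Real.exp (-lam)) →
        (∀ u : ℝ, 0 < u →
          0 ≤ -deriv φ u ∧ -deriv φ u ≤ lam * φ u ∧
          lam * φ u ≤ Real.exp (lam * (1 - u)) ∧ Real.exp (-lam * (1 + u)) ≤ φ u) →
        ∀ x σ : ℝ, 1 ≤ σ →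
          c₁ * Real.exp (-lam * |x| / σ)
            ≤ (∫ y : ℝ, φ (|x - y| / σ) * Real.exp (-2 * lam * |y|)) ∧
          (∫ y : ℝ, φ (|x - y| / σ) * Real.exp (-2 * lam * |y|))
            ≤ c₂ * Real.exp (-lam * |x| / σ) := by
  have h3lam : (0:ℝ) < 3 * lam := by linarith
  have h2lam : (0:ℝ) < 2 * lam := by linarith
  refine ⟨Real.exp (-lam) * ∫ y : ℝ, Real.exp (-(3 * lam * |y|)),
          (Real.exp lam / lam) * ∫ y : ℝ, Real.exp (-(lam * |y|)),
          mul_pos (Real.exp_pos _) (aux_exp_abs_pos h3lam),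
          mul_pos (div_pos (Real.exp_pos _) hlam0) (aux_exp_abs_pos hlam0),
          ?_⟩
  intro φ hφC2 hanti hφ01 hge2 hle1 hder x σ hσ
  have hσ0 : (0:ℝ) < σ := lt_of_lt_of_le one_pos hσ
  have hlamexp : lam ≤ Real.exp lam := by linarith [Real.add_one_le_exp lam]
  -- pointwise bounds on φ in terms of exponentials
  have hphi_ub : ∀ u : ℝ, 0 ≤ u → φ u ≤ Real.exp lam / lam * Real.exp (-(lam * u)) := by
    intro u hu
    rcases eq_or_lt_of_le hu with h | h
    · rw [← h]
      simp only [mul_zero, neg_zero, Real.exp_zero, mul_one]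
      exact le_trans (hφ01 0).2.le ((one_le_div hlam0).mpr hlamexp)
    · obtain ⟨_, _, h3, _⟩ := hder u h
      have he : Real.exp (lam * (1 - u)) = Real.exp lam * Real.exp (-(lam * u)) := by
        rw [← Real.exp_add]; ring_nf
      calc φ u = lam * φ u / lam := by field_simp
        _ ≤ Real.exp (lam * (1 - u)) / lam := by gcongr
        _ = Real.exp lam / lam * Real.exp (-(lam * u)) := by rw [he]; ring
  have hphi_lb : ∀ u : ℝ, 0 ≤ u → Real.exp (-(lam * (1 + u))) ≤ φ u := by
    intro u hu
    rcases eq_or_lt_of_le hu with h | h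
    · rw [← h]
      have h1 : φ (1/2 : ℝ) ≤ φ 0 := hanti (by norm_num)
      rw [hle1 (1/2 : ℝ) (by norm_num)] at h1
      have h2 : Real.exp (-(lam * (1 + 0))) = Real.exp (-lam) := by norm_num
      rw [h2]
      nlinarith [Real.exp_pos (-lam), sq_nonneg lam]
    · obtain ⟨_, _, _, h4⟩ := hder u h
      have : Real.exp (-lam * (1 + u)) = Real.exp (-(lam * (1 + u))) := by ring_nf
      rw [this] at h4
      exact h4
  -- triangle inequality facts
  have hut : ∀ y : ℝ, |x - y| / σ ≤ |x| / σ + |y| := by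
    intro y
    have h1 : |x - y| ≤ |x| + |y| := abs_sub x y
    have h2 : |x - y| / σ ≤ (|x| + |y|) / σ := by gcongr
    have h3 : |y| / σ ≤ |y| := div_le_self (abs_nonneg y) hσ
    calc |x - y| / σ ≤ (|x| + |y|) / σ := h2
      _ = |x| / σ + |y| / σ := by ring
      _ ≤ |x| / σ + |y| := by linarith
  have hut' : ∀ y : ℝ, |x| / σ - |y| ≤ |x - y| / σ := by
    intro y
    have h1 : |x| - |y| ≤ |x - y| := abs_sub_abs_le_abs_sub x y
    have h2 : (|x| - |y|) / σ ≤ |x - y| / σ := by gcongr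
    have h3 : |y| / σ ≤ |y| := div_le_self (abs_nonneg y) hσ
    calc |x| / σ - |y| ≤ |x| / σ - |y| / σ := by linarith
      _ = (|x| - |y|) / σ := by ring
      _ ≤ |x - y| / σ := h2
  have hu0 : ∀ y : ℝ, 0 ≤ |x - y| / σ := fun y => div_nonneg (abs_nonneg _) hσ0.le
  -- pointwise bounds on the integrand
  have hub : ∀ y : ℝ, φ (|x - y| / σ) * Real.exp (-2 * lam * |y|)
      ≤ Real.exp lam / lam * Real.exp (-(lam * |x| / σ)) * Real.exp (-(lam * |y|)) := by
    intro y
    set u := |x - y| / σ with hu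
    calc φ u * Real.exp (-2 * lam * |y|)
        ≤ Real.exp lam / lam * Real.exp (-(lam * u)) * Real.exp (-2 * lam * |y|) :=
          mul_le_mul_of_nonneg_right (hphi_ub u (hu0 y)) (Real.exp_nonneg _)
      _ = Real.exp lam / lam * Real.exp (-(lam * u) + -2 * lam * |y|) := by
          rw [Real.exp_add]; ring
      _ ≤ Real.exp lam / lam * Real.exp (-(lam * |x| / σ) + -(lam * |y|)) := by
          have hc : 0 ≤ Real.exp lam / lam := by positivity
          have h4 : lam * (|x| / σ - |y|) ≤ lam * u :=
            mul_le_mul_of_nonneg_left (hut' y) hlam0.le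
          refine mul_le_mul_of_nonneg_left (Real.exp_le_exp.mpr ?_) hc
          have h5 : lam * (|x| / σ) = lam * |x| / σ := by ring
          nlinarith [h4]
      _ = Real.exp lam / lam * Real.exp (-(lam * |x| / σ)) * Real.exp (-(lam * |y|)) := by
          rw [Real.exp_add]; ring
  have hlb : ∀ y : ℝ, Real.exp (-lam) * Real.exp (-(lam * |x| / σ)) * Real.exp (-(3 * lam * |y|))
      ≤ φ (|x - y| / σ) * Real.exp (-2 * lam * |y|) := by
    intro y
    set u := |x - y| / σ with hu
    calc Real.exp (-lam) * Real.exp (-(lam * |x| / σ)) * Real.exp (-(3 * lam * |y|))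
        = Real.exp (-lam + -(lam * |x| / σ) + -(3 * lam * |y|)) := by
          rw [Real.exp_add, Real.exp_add]
      _ ≤ Real.exp (-(lam * (1 + u)) + -2 * lam * |y|) := by
          apply Real.exp_le_exp.mpr
          have h4 : lam * u ≤ lam * (|x| / σ + |y|) :=
            mul_le_mul_of_nonneg_left (hut y) hlam0.le
          have h5 : lam * (|x| / σ) = lam * |x| / σ := by ring
          nlinarith [h4]
      _ = Real.exp (-(lam * (1 + u))) * Real.exp (-2 * lam * |y|) := by
          rw [Real.exp_add]
      _ ≤ φ u * Real.exp (-2 * lam * |y|) :=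
          mul_le_mul_of_nonneg_right (hphi_lb u (hu0 y)) (Real.exp_nonneg _)
  -- integrability
  have hIf : Integrable (fun y : ℝ => φ (|x - y| / σ) * Real.exp (-2 * lam * |y|)) := by
    have hmaj : Integrable (fun y : ℝ => Real.exp (-(2 * lam * |y|))) :=
      aux_exp_abs_integrable h2lam
    refine hmaj.mono ?_ ?_
    · have hφc : Continuous φ := hφC2.continuous
      have h1 : Continuous fun y : ℝ => |x - y| / σ :=
        ((continuous_const.sub continuous_id).abs).div_const σ
      have h2 : Continuous fun y : ℝ => Real.exp (-2 * lam * |y|) :=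
        Real.continuous_exp.comp ((continuous_const.mul continuous_abs))
      exact ((hφc.comp h1).mul h2).aestronglyMeasurable
    · filter_upwards with y
      have he : (-2 : ℝ) * lam * |y| = -(2 * lam * |y|) := by ring
      rw [Real.norm_eq_abs, Real.norm_eq_abs, abs_mul,
        abs_of_pos (hφ01 _).1, abs_of_pos (Real.exp_pos _), abs_of_pos (Real.exp_pos _), he]
      exact mul_le_of_le_one_left (Real.exp_nonneg _) (hφ01 _).2.le
  have hIlow : Integrable (fun y : ℝ =>
      Real.exp (-lam) * Real.exp (-(lam * |x| / σ)) * Real.exp (-(3 * lam * |y|))) := by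
    simpa [mul_assoc] using
      ((aux_exp_abs_integrable h3lam).const_mul
        (Real.exp (-lam) * Real.exp (-(lam * |x| / σ))))
  have hIup : Integrable (fun y : ℝ =>
      Real.exp lam / lam * Real.exp (-(lam * |x| / σ)) * Real.exp (-(lam * |y|))) := by
    simpa [mul_assoc] using
      ((aux_exp_abs_integrable hlam0).const_mul
        (Real.exp lam / lam * Real.exp (-(lam * |x| / σ))))
  have hexpeq : Real.exp (-lam * |x| / σ) = Real.exp (-(lam * |x| / σ)) := by ring_nf
  constructor
  · have hmono := integral_mono hIlow hIf hlb
    have heq : (∫ y : ℝ, Real.exp (-lam) * Real.exp (-(lam * |x| / σ)) *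
        Real.exp (-(3 * lam * |y|)))
        = Real.exp (-lam) * Real.exp (-(lam * |x| / σ)) *
          ∫ y : ℝ, Real.exp (-(3 * lam * |y|)) := by
      simp_rw [mul_assoc]
      rw [integral_const_mul, integral_const_mul]
    rw [heq] at hmono
    calc Real.exp (-lam) * (∫ y : ℝ, Real.exp (-(3 * lam * |y|))) * Real.exp (-lam * |x| / σ)
        = Real.exp (-lam) * Real.exp (-(lam * |x| / σ)) *
          ∫ y : ℝ, Real.exp (-(3 * lam * |y|)) := by rw [hexpeq]; ring
      _ ≤ _ := hmono
  · have hmono := integral_mono hIf hIup hub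
    have heq : (∫ y : ℝ, Real.exp lam / lam * Real.exp (-(lam * |x| / σ)) *
        Real.exp (-(lam * |y|)))
        = Real.exp lam / lam * Real.exp (-(lam * |x| / σ)) *
          ∫ y : ℝ, Real.exp (-(lam * |y|)) := by
      simp_rw [mul_assoc]
      rw [integral_const_mul, integral_const_mul]
    rw [heq] at hmono
    calc (∫ y : ℝ, φ (|x - y| / σ) * Real.exp (-2 * lam * |y|))
        ≤ Real.exp lam / lam * Real.exp (-(lam * |x| / σ)) *
          ∫ y : ℝ, Real.exp (-(lam * |y|)) := hmono
      _ = Real.exp lam / lam * (∫ y : ℝ, Real.exp (-(lam * |y|))) *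
          Real.exp (-lam * |x| / σ) := by rw [hexpeq]; ring
end
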